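/- Let G be a finite group, r a prime, and K a non-subnormal r-subgroup of G that is subnormal in every proper subgroup of G containing it. Then there is a unique maximal subgroup H of G containing K, and K ≤ O_r(H). -/

import Mathlib

/-- `A` is normal in `B` (for subgroups `A ≤ B` of an ambient group `G`). -/
def NormalIn {G : Type*} [Group G] (A B : Subgroup G) : Prop :=
  A ≤ B ∧ ∀ b ∈ B, ∀ a ∈ A, b * a * b⁻¹ ∈ A

/-- `A` is subnormal in `B`: there is a chain `A = A₀ ⊴ A₁ ⊴ ⋯ ⊴ A_m = B`. -/
def SubnormalIn {G : Type*} [Group G] (A B : Subgroup G) : Prop :=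
  Relation.ReflTransGen NormalIn A B

/-- The `r`-core `O_r(H)` of a subgroup `H` of `G`, viewed as a subgroup of `G`: the join of
all `r`-subgroups of `H` that are normal in `H` (for finite `H` this is the largest normal
`r`-subgroup of `H`). -/
def pCoreIn (r : ℕ) {G : Type*} [Group G] (H : Subgroup G) : Subgroup G :=
  ⨆ P ∈ {P : Subgroup G |
      P ≤ H ∧ IsPGroup r ↥P ∧ ∀ h ∈ H, ∀ p ∈ P, h * p * h⁻¹ ∈ P}, P

namespace ZipperAux

variable {G : Type*} [Group G]

/-- The conjugate subgroup `g H g⁻¹`. -/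
def conjS (g : G) (H : Subgroup G) : Subgroup G := H.map (MulAut.conj g).toMonoidHom

lemma mem_conjS {g x : G} {H : Subgroup G} :
    x ∈ conjS g H ↔ ∃ h ∈ H, g * h * g⁻¹ = x := by
  simp [conjS, Subgroup.mem_map, MulAut.conj_apply]

lemma conjS_one (H : Subgroup G) : conjS 1 H = H := by
  ext x; simp [mem_conjS]

lemma conjS_top (g : G) : conjS g (⊤ : Subgroup G) = ⊤ := by
  ext x
  simp only [Subgroup.mem_top, iff_true, mem_conjS]
  exact ⟨g⁻¹ * x * g, trivial, by group⟩

lemma conjS_mono (g : G) {A B : Subgroup G} (h : A ≤ B) : conjS g A ≤ conjS g B :=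
  Subgroup.map_mono h

lemma conjS_conjS (g h : G) (H : Subgroup G) : conjS g (conjS h H) = conjS (g * h) H := by
  ext x
  simp only [mem_conjS]
  constructor
  · rintro ⟨a, ⟨b, hb, rfl⟩, rfl⟩
    exact ⟨b, hb, by group⟩
  · rintro ⟨b, hb, rfl⟩
    exact ⟨h * b * h⁻¹, ⟨b, hb, rfl⟩, by group⟩

lemma conjS_iSup {ι : Sort*} (g : G) (f : ι → Subgroup G) :
    conjS g (⨆ i, f i) = ⨆ i, conjS g (f i) :=
  (Subgroup.gc_map_comap _).l_iSup

lemma isPGroup_conjS {r : ℕ} {g : G} {K : Subgroup G} (h : IsPGroup r ↥K) :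
    IsPGroup r ↥(conjS g K) :=
  h.map _

lemma conjS_le_of_mem {T M : Subgroup G} (hTM : T ≤ M) {g : G} (hg : g ∈ M) :
    conjS g T ≤ M := by
  rintro x hx
  obtain ⟨t, ht, rfl⟩ := mem_conjS.mp hx
  exact mul_mem (mul_mem hg (hTM ht)) (inv_mem hg)

lemma conjS_eq_of_le [Finite G] {g : G} {H : Subgroup G} (h : conjS g H ≤ H) :
    conjS g H = H := by
  refine le_antisymm h ?_
  have hφ : Function.Injective (fun a : H => (⟨g * a * g⁻¹,
      h (mem_conjS.mpr ⟨a, a.2, rfl⟩)⟩ : H)) := by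
    intro a b hab
    have : g * (a : G) * g⁻¹ = g * (b : G) * g⁻¹ := congrArg Subtype.val hab
    have : (a : G) = b := by
      have := congrArg (fun x => g⁻¹ * x * g) this
      simpa [mul_assoc] using this
    exact Subtype.ext this
  intro x hx
  obtain ⟨⟨y, hy⟩, hxy⟩ := (Finite.injective_iff_surjective.mp hφ) ⟨x, hx⟩
  have : g * y * g⁻¹ = x := congrArg Subtype.val hxy
  exact mem_conjS.mpr ⟨y, hy, this⟩

lemma mem_normalizer_of_conjS_le [Finite G] {g : G} {H : Subgroup G}
    (h : conjS g H ≤ H) : g ∈ (Subgroup.normalizer (H : Set G)) := by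
  have heq := conjS_eq_of_le h
  rw [Subgroup.mem_normalizer_iff]
  intro x
  constructor
  · intro hx; exact h (mem_conjS.mpr ⟨x, hx, rfl⟩)
  · intro hx
    rw [← heq] at hx
    obtain ⟨y, hy, hxy⟩ := mem_conjS.mp hx
    have : y = x := by
      have := congrArg (fun z => g⁻¹ * z * g) hxy
      simpa [mul_assoc] using this
    exact this ▸ hy

lemma normalIn_le {A B : Subgroup G} (h : NormalIn A B) : A ≤ B := h.1

lemma normalIn_refl (A : Subgroup G) : NormalIn A A :=
  ⟨le_rfl, fun b hb a ha => mul_mem (mul_mem hb ha) (inv_mem hb)⟩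

lemma subnormalIn_le {A B : Subgroup G} (h : SubnormalIn A B) : A ≤ B := by
  induction h with
  | refl => exact le_rfl
  | tail _ hbc ih => exact ih.trans hbc.1

lemma normalIn_conjS {A B : Subgroup G} (g : G) (h : NormalIn A B) :
    NormalIn (conjS g A) (conjS g B) := by
  refine ⟨conjS_mono g h.1, ?_⟩
  rintro b hb a ha
  obtain ⟨b0, hb0, rfl⟩ := mem_conjS.mp hb
  obtain ⟨a0, ha0, rfl⟩ := mem_conjS.mp ha
  refine mem_conjS.mpr ⟨b0 * a0 * b0⁻¹, h.2 b0 hb0 a0 ha0, by group⟩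

lemma subnormalIn_conjS {A B : Subgroup G} (g : G) (h : SubnormalIn A B) :
    SubnormalIn (conjS g A) (conjS g B) :=
  Relation.ReflTransGen.lift (conjS g) (fun _ _ hab => normalIn_conjS g hab) _ _ h

lemma exists_penult {T Z : Subgroup G} (h : SubnormalIn T Z) :
    T ≠ Z → ∃ A, SubnormalIn T A ∧ NormalIn A Z ∧ A ≠ Z := by
  induction h with
  | refl => intro hne; exact absurd rfl hne
  | @tail b c hab hbc ih =>
    intro hne
    by_cases hb : b = c
    · subst hb; exact ih hne
    · exact ⟨b, hab, hbc, hb⟩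

section PCore

variable {r : ℕ}

lemma le_pCoreIn {Y P : Subgroup G} (h1 : P ≤ Y) (h2 : IsPGroup r ↥P)
    (h3 : ∀ h ∈ Y, ∀ p ∈ P, h * p * h⁻¹ ∈ P) : P ≤ pCoreIn r Y :=
  le_iSup₂_of_le P ⟨h1, h2, h3⟩ le_rfl

lemma pCoreIn_le {Y : Subgroup G} : pCoreIn r Y ≤ Y :=
  iSup₂_le fun _ hP => hP.1

lemma conjS_pCoreIn_le {A : Subgroup G} {y : G}
    (hy : ∀ a ∈ A, y * a * y⁻¹ ∈ A) (hy' : ∀ a ∈ A, y⁻¹ * a * y ∈ A) :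
    conjS y (pCoreIn r A) ≤ pCoreIn r A := by
  rw [pCoreIn, conjS_iSup]
  refine iSup_le fun P => ?_
  rw [conjS_iSup]
  refine iSup_le fun hP => ?_
  refine le_pCoreIn ?_ (isPGroup_conjS hP.2.1) ?_
  · rintro x hx
    obtain ⟨p, hp, rfl⟩ := mem_conjS.mp hx
    exact hy p (hP.1 hp)
  · rintro a ha x hx
    obtain ⟨p, hp, rfl⟩ := mem_conjS.mp hx
    have hin : y⁻¹ * a * y ∈ A := hy' a ha
    refine mem_conjS.mpr ⟨(y⁻¹ * a * y) * p * (y⁻¹ * a * y)⁻¹,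
      hP.2.2 _ hin p hp, by group⟩

lemma pCoreIn_conj_mem {Y : Subgroup G} :
    ∀ h ∈ Y, ∀ c ∈ pCoreIn r Y, h * c * h⁻¹ ∈ pCoreIn r Y := by
  intro h hh c hc
  refine conjS_pCoreIn_le (fun a ha => mul_mem (mul_mem hh ha) (inv_mem hh))
    (fun a ha => mul_mem (mul_mem (inv_mem hh) ha) hh) (mem_conjS.mpr ⟨c, hc, rfl⟩)

lemma le_normalizer_of_conj_mem {Y R : Subgroup G}
    (hRY : ∀ y ∈ Y, ∀ x ∈ R, y * x * y⁻¹ ∈ R) : Y ≤ (Subgroup.normalizer (R : Set G)) := by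
  intro y hy
  rw [Subgroup.mem_normalizer_iff]
  intro x
  constructor
  · exact fun hx => hRY y hy x hx
  · intro hx
    have := hRY y⁻¹ (inv_mem hy) _ hx
    simpa [mul_assoc] using this

lemma isPGroup_pCoreIn [Finite G] (hr : r.Prime) (Y : Subgroup G) :
    IsPGroup r ↥(pCoreIn r Y) := by
  haveI : Fact r.Prime := ⟨hr⟩
  haveI : Finite (Subgroup G) :=
    Finite.of_injective (fun H : Subgroup G => (H : Set G)) SetLike.coe_injective
  set S := {P : Subgroup G |
      P ≤ Y ∧ IsPGroup r ↥P ∧ ∀ h ∈ Y, ∀ p ∈ P, h * p * h⁻¹ ∈ P} with hS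
  have key : ∀ s : Set (Subgroup G), s.Finite → s ⊆ S →
      IsPGroup r ↥(⨆ P ∈ s, P) ∧ (⨆ P ∈ s, P) ≤ Y ∧
      (∀ h ∈ Y, ∀ p ∈ (⨆ P ∈ s, P), h * p * h⁻¹ ∈ (⨆ P ∈ s, P)) := by
    intro s hs
    refine Set.Finite.induction_on s hs ?_ ?_
    · intro _
      have hbot : (⨆ P ∈ (∅ : Set (Subgroup G)), P) = (⊥ : Subgroup G) := by
        simp
      rw [hbot]
      refine ⟨IsPGroup.of_bot, bot_le, ?_⟩
      intro h hh p hp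
      rw [Subgroup.mem_bot.mp hp]
      simpa using Subgroup.one_mem (⊥ : Subgroup G)
    · intro a s _ _ ih hsub
      have haS : a ∈ S := hsub (Set.mem_insert _ _)
      have hsS : s ⊆ S := fun x hx => hsub (Set.mem_insert_of_mem _ hx)
      obtain ⟨ihp, ihle, ihconj⟩ := ih hsS
      rw [iSup_insert]
      refine ⟨?_, sup_le haS.1 ihle, ?_⟩
      · refine IsPGroup.to_sup_of_normal_right' haS.2.1 ihp ?_
        exact haS.1.trans (le_normalizer_of_conj_mem ihconj)
      · intro h hh p hp
        have : conjS h (a ⊔ ⨆ P ∈ s, P) ≤ a ⊔ ⨆ P ∈ s, P := by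
          have : conjS h (a ⊔ ⨆ P ∈ s, P) = conjS h a ⊔ conjS h (⨆ P ∈ s, P) :=
            (Subgroup.gc_map_comap _).l_sup
          rw [this]
          refine sup_le ?_ ?_
          · rintro x hx
            obtain ⟨p0, hp0, rfl⟩ := mem_conjS.mp hx
            exact le_sup_left (α := Subgroup G) (haS.2.2 h hh p0 hp0)
          · rintro x hx
            obtain ⟨p0, hp0, rfl⟩ := mem_conjS.mp hx
            exact le_sup_right (α := Subgroup G) (ihconj h hh p0 hp0)
        exact this (mem_conjS.mpr ⟨p, hp, rfl⟩)
  have := (key S (Set.toFinite _) le_rfl).1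
  rw [pCoreIn]
  exact this

lemma le_pCoreIn_of_subnormalIn [Finite G] (hr : r.Prime) {Q Y : Subgroup G}
    (hQ : IsPGroup r ↥Q) (h : SubnormalIn Q Y) : Q ≤ pCoreIn r Y := by
  induction h with
  | refl =>
    exact le_pCoreIn le_rfl hQ (fun b hb a ha => mul_mem (mul_mem hb ha) (inv_mem hb))
  | @tail A Y hQA hAY ih =>
    refine ih.trans (le_pCoreIn (pCoreIn_le.trans hAY.1) (isPGroup_pCoreIn hr A) ?_)
    intro y hy c hc
    refine conjS_pCoreIn_le (fun a ha => hAY.2 y hy a ha)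
      (fun a ha => ?_) (mem_conjS.mpr ⟨c, hc, rfl⟩)
    have := hAY.2 y⁻¹ (inv_mem hy) a ha
    rwa [inv_inv] at this

end PCore

lemma subnormalIn_of_le_pgroup [Finite G] {r : ℕ} (hr : r.Prime) {P : Subgroup G}
    (hP : IsPGroup r ↥P) : ∀ Q : Subgroup G, Q ≤ P → SubnormalIn Q P := by
  haveI : Fact r.Prime := ⟨hr⟩
  haveI : Finite (Subgroup G) :=
    Finite.of_injective (fun H : Subgroup G => (H : Set G)) SetLike.coe_injective
  intro Q
  refine wellFounded_gt.induction
    (C := fun Q : Subgroup G => Q ≤ P → SubnormalIn Q P) Q ?_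
  clear Q
  intro Q IH hQP
  rcases eq_or_lt_of_le hQP with heq | hlt
  · exact heq ▸ Relation.ReflTransGen.refl
  · -- find strictly larger subgroup of P normalizing Q
    have hnil : Group.IsNilpotent ↥P := hP.isNilpotent
    have hcond : NormalizerCondition ↥P := normalizerCondition_of_isNilpotent
    set Q₀ := Q.subgroupOf P with hQ₀
    have hQ₀top : Q₀ < ⊤ := by
      rcases lt_or_eq_of_le (le_top : Q₀ ≤ ⊤) with h | h
      · exact h
      · exfalso
        have := Subgroup.subgroupOf_eq_top.mp h
        exact absurd (le_antisymm hQP this) hlt.ne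
    obtain ⟨xb, hxbmem, hxbnot⟩ := SetLike.exists_of_lt (hcond Q₀ hQ₀top)
    have hxP : (xb : G) ∈ P := xb.2
    have hxQ : (xb : G) ∉ Q := by
      intro h
      exact hxbnot (Subgroup.mem_subgroupOf.mpr h)
    have hxN : (xb : G) ∈ (Subgroup.normalizer (Q : Set G)) := by
      rw [Subgroup.mem_normalizer_iff]
      intro h
      constructor
      · intro hh
        have hhP : h ∈ P := hQP hh
        have : (⟨h, hhP⟩ : P) ∈ Q₀ := Subgroup.mem_subgroupOf.mpr hh
        have := (Subgroup.mem_normalizer_iff.mp hxbmem ⟨h, hhP⟩).mp this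
        exact Subgroup.mem_subgroupOf.mp this
      · intro hh
        have hzP : (xb : G) * h * (xb : G)⁻¹ ∈ P := hQP hh
        have hhP : h ∈ P := by
          have : (xb : G)⁻¹ * ((xb : G) * h * (xb : G)⁻¹) * (xb : G) ∈ P :=
            mul_mem (mul_mem (inv_mem hxP) hzP) hxP
          simpa [mul_assoc] using this
        have hz₀ : (⟨(xb : G) * h * (xb : G)⁻¹, hzP⟩ : P) ∈ Q₀ :=
          Subgroup.mem_subgroupOf.mpr hh
        have hxbinv : xb⁻¹ ∈ (Subgroup.normalizer (Q₀ : Set _)) := inv_mem hxbmem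
        have : xb⁻¹ * ⟨(xb : G) * h * (xb : G)⁻¹, hzP⟩ * xb⁻¹⁻¹ ∈ Q₀ :=
          (Subgroup.mem_normalizer_iff.mp hxbinv _).mp hz₀
        have hc := Subgroup.mem_subgroupOf.mp this
        have hcoe : ((xb⁻¹ * ⟨(xb : G) * h * (xb : G)⁻¹, hzP⟩ * xb⁻¹⁻¹ : P) : G) = h := by
          push_cast
          group
        rwa [hcoe] at hc
    set Q' := (Subgroup.normalizer (Q : Set G)) ⊓ P with hQ'
    have hQQ' : Q ≤ Q' := le_inf Subgroup.le_normalizer hQP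
    have hQltQ' : Q < Q' := by
      refine lt_of_le_of_ne hQQ' (fun h => hxQ ?_)
      rw [h]
      exact ⟨hxN, hxP⟩
    have hnormal : NormalIn Q Q' := by
      refine ⟨hQQ', fun b hb a ha => ?_⟩
      exact (Subgroup.mem_normalizer_iff.mp hb.1 a).mp ha
    exact Relation.ReflTransGen.head hnormal (IH Q' hQltQ' inf_le_right)

lemma exists_coatom_ge [Finite G] {H : Subgroup G} (hH : H ≠ ⊤) :
    ∃ M : Subgroup G, IsCoatom M ∧ H ≤ M := by
  haveI : Finite (Subgroup G) :=
    Finite.of_injective (fun H : Subgroup G => (H : Set G)) SetLike.coe_injective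
  obtain ⟨M, ⟨hHM, hMne⟩, hmax⟩ :=
    wellFounded_gt.has_min {X : Subgroup G | H ≤ X ∧ X ≠ ⊤} ⟨H, le_rfl, hH⟩
  refine ⟨M, ⟨hMne, fun b hb => ?_⟩, hHM⟩
  by_contra hbne
  exact hmax b ⟨hHM.trans hb.le, hbne⟩ hb

/-- `T` is generated by the conjugates of `K` it contains, and contains `K`. -/
def Good (K T : Subgroup G) : Prop :=
  K ≤ T ∧ T = ⨆ g ∈ {g : G | conjS g K ≤ T}, conjS g K

lemma good_self (K : Subgroup G) : Good K K := by
  constructor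
  · exact le_rfl
  · refine le_antisymm ?_ (iSup₂_le fun g hg => hg)
    exact le_iSup₂_of_le 1 (by rw [Set.mem_setOf_eq, conjS_one]) (by rw [conjS_one])

lemma good_sup {K T : Subgroup G} (hT : Good K T) {s : G → Prop} (h1 : s 1) :
    Good K (⨆ g, ⨆ _ : s g, conjS g T) := by
  set W := ⨆ g, ⨆ _ : s g, conjS g T with hW
  have hTW : T ≤ W := by
    have : conjS 1 T ≤ W := le_iSup₂_of_le 1 h1 le_rfl
    rwa [conjS_one] at this
  refine ⟨hT.1.trans hTW, le_antisymm ?_ (iSup₂_le fun g hg => hg)⟩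
  rw [hW]
  refine iSup₂_le fun m hm => ?_
  have hmW : conjS m T ≤ W := le_iSup₂_of_le m hm le_rfl
  conv_lhs => rw [hT.2]
  rw [conjS_iSup]
  refine iSup_le fun g => ?_
  rw [conjS_iSup]
  refine iSup_le fun hg => ?_
  rw [conjS_conjS]
  refine le_iSup₂_of_le (m * g) ?_ le_rfl
  rw [Set.mem_setOf_eq, ← conjS_conjS]
  exact (conjS_mono m hg).trans hmW

section Main

variable [Finite G] {r : ℕ} {K : Subgroup G}

lemma hws_conj (hws : ∀ M : Subgroup G, M ≠ ⊤ → K ≤ M → SubnormalIn K M)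
    (g : G) (Y : Subgroup G) (hY : Y ≠ ⊤) (hle : conjS g K ≤ Y) :
    SubnormalIn (conjS g K) Y := by
  have h1 : K ≤ conjS g⁻¹ Y := by
    have := conjS_mono g⁻¹ hle
    rwa [conjS_conjS, inv_mul_cancel, conjS_one] at this
  have h2 : conjS g⁻¹ Y ≠ ⊤ := by
    intro h
    apply hY
    have := congrArg (conjS g) h
    rwa [conjS_conjS, mul_inv_cancel, conjS_one, conjS_top] at this
  have := subnormalIn_conjS g (hws _ h2 h1)
  rwa [conjS_conjS, mul_inv_cancel, conjS_one] at this

lemma good_pgroup (hr : r.Prime) (hK : IsPGroup r ↥K)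
    (hws : ∀ M : Subgroup G, M ≠ ⊤ → K ≤ M → SubnormalIn K M)
    {T : Subgroup G} (hT : Good K T) (hTne : T ≠ ⊤) : IsPGroup r ↥T := by
  have hsub : T ≤ pCoreIn r T := by
    conv_lhs => rw [hT.2]
    refine iSup₂_le fun g hg => ?_
    exact le_pCoreIn_of_subnormalIn hr (isPGroup_conjS hK) (hws_conj hws g T hTne hg)
  have heq : pCoreIn r T = T := le_antisymm pCoreIn_le hsub
  exact heq ▸ isPGroup_pCoreIn hr T

lemma uniq (hr : r.Prime) (hK : IsPGroup r ↥K)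
    (hns : ¬ SubnormalIn K (⊤ : Subgroup G))
    (hws : ∀ M : Subgroup G, M ≠ ⊤ → K ≤ M → SubnormalIn K M) :
    ∀ T : Subgroup G, Good K T → T ≠ ⊤ →
      ∀ M₁ : Subgroup G, IsCoatom M₁ → T ≤ M₁ →
      ∀ M₂ : Subgroup G, IsCoatom M₂ → T ≤ M₂ → M₁ = M₂ := by
  haveI : Finite (Subgroup G) :=
    Finite.of_injective (fun H : Subgroup G => (H : Set G)) SetLike.coe_injective
  intro T
  refine wellFounded_gt.induction
    (C := fun T : Subgroup G => Good K T → T ≠ ⊤ →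
      ∀ M₁ : Subgroup G, IsCoatom M₁ → T ≤ M₁ →
      ∀ M₂ : Subgroup G, IsCoatom M₂ → T ≤ M₂ → M₁ = M₂) T ?_
  clear T
  intro T IH hgood hne M₁ hM₁c hTM₁ M₂ hM₂c hTM₂
  have hNne : (Subgroup.normalizer (T : Set G)) ≠ ⊤ := by
    intro hN
    apply hns
    have hTtop : NormalIn T ⊤ := by
      refine ⟨le_top, fun b _ a ha => ?_⟩
      have hb : b ∈ (Subgroup.normalizer (T : Set G)) := by rw [hN]; trivial
      exact (Subgroup.mem_normalizer_iff.mp hb a).mp ha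
    have h1 : SubnormalIn K T :=
      subnormalIn_of_le_pgroup hr (good_pgroup hr hK hws hgood hne) K hgood.1
    exact h1.trans (Relation.ReflTransGen.single hTtop)
  obtain ⟨M', hM'c, hNM'⟩ := exists_coatom_ge hNne
  have step : ∀ W : Subgroup G, T ≤ W → ¬ W ≤ (Subgroup.normalizer (T : Set G)) →
      T < (⨆ g, ⨆ _ : g ∈ W, conjS g T) ∧ (⨆ g, ⨆ _ : g ∈ W, conjS g T) ≤ W ∧
      Good K (⨆ g, ⨆ _ : g ∈ W, conjS g T) := by
    intro W hTW hWN
    have hsub : (⨆ g, ⨆ _ : g ∈ W, conjS g T) ≤ W :=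
      iSup₂_le fun g hg => conjS_le_of_mem hTW hg
    have hTle : T ≤ ⨆ g, ⨆ _ : g ∈ W, conjS g T := by
      have : conjS 1 T ≤ ⨆ g, ⨆ _ : g ∈ W, conjS g T :=
        le_iSup₂_of_le 1 (one_mem W) le_rfl
      rwa [conjS_one] at this
    have hneq : T ≠ ⨆ g, ⨆ _ : g ∈ W, conjS g T := by
      intro h
      apply hWN
      intro w hw
      have hle : conjS w T ≤ ⨆ g, ⨆ _ : g ∈ W, conjS g T :=
        le_iSup₂_of_le w hw le_rfl
      rw [← h] at hle
      exact mem_normalizer_of_conjS_le hle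
    exact ⟨lt_of_le_of_ne hTle hneq, hsub, good_sup hgood (one_mem W)⟩
  have key : ∀ M : Subgroup G, IsCoatom M → T ≤ M → M = M' := by
    intro M hMc hTM
    by_cases hMN : M ≤ (Subgroup.normalizer (T : Set G))
    · by_contra h
      exact hM'c.1 (hMc.2 M' (lt_of_le_of_ne (hMN.trans hNM') h))
    · obtain ⟨hV1, hV2, hV3⟩ := step M hTM hMN
      obtain ⟨Z, ⟨hTZ, hZM, hZgood⟩, hZmin⟩ :=
        wellFounded_lt.has_min {Z : Subgroup G | T < Z ∧ Z ≤ M ∧ Good K Z}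
          ⟨_, hV1, hV2, hV3⟩
      have hZne : Z ≠ ⊤ := fun h => hMc.1 (top_le_iff.mp (h ▸ hZM))
      have hZN : Z ≤ (Subgroup.normalizer (T : Set G)) := by
        by_contra hZN
        obtain ⟨hV'1, hV'2, hV'3⟩ := step Z hTZ.le hZN
        have hZp : IsPGroup r ↥Z := good_pgroup hr hK hws hZgood hZne
        have hTsubZ : SubnormalIn T Z := subnormalIn_of_le_pgroup hr hZp T hTZ.le
        obtain ⟨A, hTA, hAZ, hAne⟩ := exists_penult hTsubZ hTZ.ne
        have hV'A : (⨆ g, ⨆ _ : g ∈ Z, conjS g T) ≤ A := by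
          refine iSup₂_le fun z hz => ?_
          rintro x hx
          obtain ⟨t, ht, rfl⟩ := mem_conjS.mp hx
          exact hAZ.2 z hz t (subnormalIn_le hTA ht)
        have hV'ltZ : (⨆ g, ⨆ _ : g ∈ Z, conjS g T) < Z := by
          refine lt_of_le_of_ne hV'2 (fun h => hAne (le_antisymm hAZ.1 ?_))
          rw [← h]
          exact hV'A
        exact hZmin _ ⟨hV'1, hV'2.trans hZM, hV'3⟩ hV'ltZ
      exact IH Z hTZ hZgood hZne M hMc hZM M' hM'c (hZN.trans hNM')
  exact (key M₁ hM₁c hTM₁).trans (key M₂ hM₂c hTM₂).symm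

end Main

end ZipperAux

/-- Via Wielandt's Zipper Lemma: let `G` be a finite group, `r` a prime and `K` an
`r`-subgroup of `G` which is not subnormal in `G` but is subnormal in every proper subgroup
of `G` containing it (i.e. `K` is weakly subnormal). Then `K` is contained in a unique
maximal subgroup `H` of `G`, and moreover `K ≤ O_r(H)`. -/
theorem stmt_18 {G : Type*} [Group G] [Finite G] {r : ℕ} (hr : r.Prime)
    (K : Subgroup G) (hK : IsPGroup r ↥K)
    (hns : ¬ SubnormalIn K (⊤ : Subgroup G))
    (hws : ∀ M : Subgroup G, M ≠ ⊤ → K ≤ M → SubnormalIn K M) :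
    ∃ H : Subgroup G, (IsCoatom H ∧ K ≤ H) ∧
      (∀ H' : Subgroup G, IsCoatom H' → K ≤ H' → H' = H) ∧
      K ≤ pCoreIn r H := by
  have hKne : K ≠ ⊤ := fun h => hns (h ▸ Relation.ReflTransGen.refl)
  obtain ⟨H, hHc, hKH⟩ := ZipperAux.exists_coatom_ge hKne
  refine ⟨H, ⟨hHc, hKH⟩, ?_, ?_⟩
  · intro H' hH'c hKH'
    exact ZipperAux.uniq hr hK hns hws K (ZipperAux.good_self K) hKne H' hH'c hKH' H hHc hKH
  · exact ZipperAux.le_pCoreIn_of_subnormalIn hr hK (hws H hHc.1 hKH)
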